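/- Let ν ≥ 1 and m ≥ 1. Every m-linear SO(2ν+1)-invariant polynomial over an algebraically closed field of characteristic 2 has multiplicity at least min(m, 2ν) in the x, y variables, i.e., every monomial has total degree at least min(m, 2ν) in the x and y coordinates. -/

import Mathlib

open MvPolynomial

/-- The standard quadratic form `x₁y₁ + ⋯ + x_ν y_ν (+ z²)` on `n`-space. -/
def stdQ (F : Type*) [CommRing F] (n : ℕ) (v : Fin n → F) : F :=
  (∑ r : Fin (n/2), v ⟨2*r.1, by have := r.2; omega⟩ * v ⟨2*r.1+1, by have := r.2; omega⟩)
  + if h : n % 2 = 1 then (v ⟨n-1, by omega⟩)^2 else 0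


/-- The action of a matrix `g` on polynomials in the coordinates of `m` vectors,
substituting `v ↦ g v` in each vector variable. -/
noncomputable def substAct {k : Type*} [CommSemiring k] {m n : ℕ}
    (g : Matrix (Fin n) (Fin n) k) :
    MvPolynomial (Fin m × Fin n) k →ₐ[k] MvPolynomial (Fin m × Fin n) k :=
  MvPolynomial.aeval fun ic => ∑ c : Fin n, MvPolynomial.C (g ic.2 c) * MvPolynomial.X (ic.1, c)


/-- `p` is `m`-linear: each monomial has degree exactly 1 in the variables of each vector. -/
def IsMultilinear {k : Type*} [CommSemiring k] {m n : ℕ}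
    (p : MvPolynomial (Fin m × Fin n) k) : Prop :=
  ∀ d ∈ p.support, ∀ i : Fin m, (∑ c : Fin n, d (i, c)) = 1


/-- Membership in the orthogonal group `O(n)`: an invertible matrix preserving `stdQ`. -/
def inO {k : Type*} [CommRing k] {n : ℕ} (g : Matrix (Fin n) (Fin n) k) : Prop :=
  IsUnit g.det ∧ ∀ v : Fin n → k, stdQ k n (g.mulVec v) = stdQ k n v



/-! ### Auxiliary machinery -/

section Aux

open Finset

set_option linter.unusedSectionVars false
set_option maxHeartbeats 1000000

lemma natSumOne {n : ℕ} (f : Fin n → ℕ) (h : ∑ c, f c = 1) :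
    ∃ c₀, ∀ c, f c = if c = c₀ then 1 else 0 := by
  have h0 : ∑ c, f c ≠ 0 := by omega
  obtain ⟨c₀, _, hc₀⟩ := Finset.exists_ne_zero_of_sum_ne_zero h0
  have h1 : f c₀ ≤ 1 := h ▸ Finset.single_le_sum (fun i _ => Nat.zero_le _) (Finset.mem_univ c₀)
  have h2 : f c₀ + ∑ c ∈ Finset.univ.erase c₀, f c = 1 := by
    rw [Finset.add_sum_erase _ _ (Finset.mem_univ c₀), h]
  refine ⟨c₀, fun c => ?_⟩
  by_cases hc : c = c₀
  · subst hc; simp; omega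
  · simp [hc]
    have : ∑ c ∈ Finset.univ.erase c₀, f c = 0 := by omega
    have := (Finset.sum_eq_zero_iff).1 this c (by simp [hc])
    exact this

/-- The multilinear monomial attached to a choice of one coordinate per vector. -/
noncomputable def Dmon {m n : ℕ} (ρ : Fin m → Fin n) : (Fin m × Fin n) →₀ ℕ :=
  ∑ i, Finsupp.single (i, ρ i) 1

lemma Dmon_apply {m n : ℕ} (ρ : Fin m → Fin n) (j : Fin m) (r : Fin n) :
    Dmon ρ (j, r) = if ρ j = r then 1 else 0 := by
  rw [Dmon, Finsupp.finset_sum_apply]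
  rw [Finset.sum_eq_single j]
  · simp [Finsupp.single_apply, Prod.ext_iff]
  · intro i _ hi
    simp [Finsupp.single_apply, Prod.ext_iff, hi]
  · simp

lemma Dmon_inj {m n : ℕ} {ρ ρ' : Fin m → Fin n} (h : Dmon ρ = Dmon ρ') : ρ = ρ' := by
  funext j
  have := congrArg (fun d : (Fin m × Fin n) →₀ ℕ => d (j, ρ j)) h
  rw [Dmon_apply, Dmon_apply, if_pos rfl] at this
  by_contra hne
  rw [if_neg (fun hh => hne hh.symm)] at this; exact one_ne_zero this

lemma exists_rho {k : Type*} [CommSemiring k] {m n : ℕ}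
    {p : MvPolynomial (Fin m × Fin n) k} (hlin : IsMultilinear p)
    {d : (Fin m × Fin n) →₀ ℕ} (hd : d ∈ p.support) : ∃ ρ, d = Dmon ρ := by
  have h : ∀ i : Fin m, ∃ c₀ : Fin n, ∀ c, d (i, c) = if c = c₀ then 1 else 0 :=
    fun i => natSumOne _ (hlin d hd i)
  choose ρ hρ using h
  refine ⟨ρ, Finsupp.ext fun v => ?_⟩
  obtain ⟨j, r⟩ := v
  rw [Dmon_apply, hρ j r]
  simp [eq_comm]

lemma eval_Dmon {k : Type*} [CommSemiring k] {m n : ℕ} (ρ : Fin m → Fin n) (a : k)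
    (V : Fin m × Fin n → k) :
    eval V (monomial (Dmon ρ) a) = a * ∏ i : Fin m, V (i, ρ i) := by
  rw [eval_monomial]
  congr 1
  rw [Finsupp.prod_fintype _ _ (fun v => pow_zero _)]
  rw [Fintype.prod_prod_type]
  refine Finset.prod_congr rfl fun i _ => ?_
  have : ∀ r : Fin n, V (i, r) ^ (Dmon ρ) (i, r) = if ρ i = r then V (i, r) else 1 := by
    intro r; rw [Dmon_apply]; by_cases h : ρ i = r <;> simp [h]
  simp_rw [this]
  simp [Finset.prod_ite_eq]

lemma eval_substAct {k : Type*} [CommSemiring k] {m n : ℕ}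
    (g : Matrix (Fin n) (Fin n) k) (V : Fin m × Fin n → k)
    (q : MvPolynomial (Fin m × Fin n) k) :
    eval V (substAct g q) = eval (fun ic => ∑ u : Fin n, g ic.2 u * V (ic.1, u)) q := by
  have : (eval V).comp ((substAct g : MvPolynomial (Fin m × Fin n) k →ₐ[k] _) :
      MvPolynomial (Fin m × Fin n) k →+* MvPolynomial (Fin m × Fin n) k)
      = eval (fun ic => ∑ u : Fin n, g ic.2 u * V (ic.1, u)) := by
    apply MvPolynomial.ringHom_ext
    · intro r; simp [substAct]
    · intro ic; simp [substAct]
  exact congrArg (fun f : MvPolynomial (Fin m × Fin n) k →+* k => f q) this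

/-- Key evaluation lemma: evaluating a multilinear `p` at basis vectors in all slots
except slot `i₀`, where we put the vector `w`. -/
lemma eval_L {k : Type*} [CommSemiring k] {m n : ℕ}
    (p : MvPolynomial (Fin m × Fin n) k)
    (hst : ∀ d ∈ p.support, ∃ ρ : Fin m → Fin n, d = Dmon ρ)
    (i₀ : Fin m) (ρ₀ : Fin m → Fin n) (w : Fin n → k) :
    eval (fun ic => if ic.1 = i₀ then w ic.2 else if ic.2 = ρ₀ ic.1 then 1 else 0) p
      = ∑ r : Fin n, w r * coeff (Dmon (Function.update ρ₀ i₀ r)) p := by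
  set V : Fin m × Fin n → k :=
    fun ic => if ic.1 = i₀ then w ic.2 else if ic.2 = ρ₀ ic.1 then 1 else 0 with hV
  conv_lhs => rw [← support_sum_monomial_coeff p]
  rw [map_sum]
  have key : ∀ d ∈ p.support, eval V (monomial d (coeff d p))
      = ∑ r : Fin n, if d = Dmon (Function.update ρ₀ i₀ r) then w r * coeff d p else 0 := by
    intro d hd
    obtain ⟨ρd, rfl⟩ := hst d hd
    rw [eval_Dmon]
    by_cases hmatch : ∀ i, i ≠ i₀ → ρd i = ρ₀ i
    · have hupd : ∀ r : Fin n, (Dmon ρd = Dmon (Function.update ρ₀ i₀ r)) ↔ r = ρd i₀ := by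
        intro r
        constructor
        · intro h
          have := Dmon_inj h
          have := congrFun this i₀
          simp [Function.update_self] at this
          exact this.symm
        · rintro rfl
          congr 1
          funext i
          by_cases hi : i = i₀
          · subst hi; simp
          · rw [Function.update_of_ne hi, hmatch i hi]
      have : ∀ r : Fin n, (if Dmon ρd = Dmon (Function.update ρ₀ i₀ r)
          then w r * coeff (Dmon ρd) p else 0)
          = if r = ρd i₀ then w r * coeff (Dmon ρd) p else 0 := by
        intro r; exact if_congr (hupd r) rfl rfl
      rw [Finset.sum_congr rfl fun r _ => this r, Finset.sum_ite_eq']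
      simp only [Finset.mem_univ, if_true]
      have hprod : ∏ i : Fin m, V (i, ρd i) = w (ρd i₀) := by
        rw [Finset.prod_eq_single i₀]
        · simp [hV]
        · intro i _ hi
          simp [hV, hi, hmatch i hi]
        · simp
      rw [hprod]; ring
    · push_neg at hmatch
      obtain ⟨i₁, hi₁, hne⟩ := hmatch
      have hzero : V (i₁, ρd i₁) = 0 := by simp [hV, hi₁, hne]
      rw [Finset.prod_eq_zero (Finset.mem_univ i₁) hzero, mul_zero]
      symm
      refine Finset.sum_eq_zero fun r _ => ?_
      rw [if_neg]
      intro h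
      have := congrFun (Dmon_inj h) i₁
      rw [Function.update_of_ne hi₁] at this
      exact hne this
  rw [Finset.sum_congr rfl key, Finset.sum_comm]
  refine Finset.sum_congr rfl fun r _ => ?_
  have : ∀ d ∈ p.support, (if d = Dmon (Function.update ρ₀ i₀ r) then w r * coeff d p else 0)
      = if d = Dmon (Function.update ρ₀ i₀ r)
          then w r * coeff (Dmon (Function.update ρ₀ i₀ r)) p else 0 := by
    intro d _
    by_cases h : d = Dmon (Function.update ρ₀ i₀ r)
    · rw [if_pos h, if_pos h, h]
    · rw [if_neg h, if_neg h]
  rw [Finset.sum_congr rfl this, Finset.sum_ite_eq']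
  split_ifs with h
  · rfl
  · rw [notMem_support_iff.1 h, mul_zero]

variable {k : Type*} [CommRing k] [CharP k 2]

/-- The transvection-like matrix `1 + s E_{z c} + s² E_{c' c}`. -/
def Gmat {n : ℕ} (z c c' : Fin n) (s : k) : Matrix (Fin n) (Fin n) k :=
  Matrix.of fun r u => (if r = u then 1 else 0)
    + (if r = z ∧ u = c then s else 0) + (if r = c' ∧ u = c then s^2 else 0)

lemma Gmat_sq {n : ℕ} (z c c' : Fin n) (s : k) (hcz : c ≠ z) (hcc' : c ≠ c') :
    Gmat z c c' s * Gmat z c c' s = 1 := by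
  set N : Matrix (Fin n) (Fin n) k := Matrix.of fun r u =>
    (if r = z ∧ u = c then s else 0) + (if r = c' ∧ u = c then s^2 else 0) with hN
  have hG : Gmat z c c' s = 1 + N := by
    ext r u
    simp [Gmat, hN, Matrix.one_apply, add_assoc]
  have hNN : N * N = 0 := by
    ext r u
    rw [Matrix.mul_apply]
    refine Finset.sum_eq_zero fun v _ => ?_
    by_cases hv : v = c
    · have : N v u = 0 := by
        rw [hv]; simp [hN, hcz, hcc']
      rw [this, mul_zero]
    · have : N r v = 0 := by
        simp [hN, hv]
      rw [this, zero_mul]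
  have h2 : N + N = 0 := by
    ext r u; exact CharTwo.add_self_eq_zero _
  rw [hG]
  have expand : (1 + N) * (1 + N) = 1 + (N + N) + N * N := by noncomm_ring
  rw [expand, hNN, h2, add_zero, add_zero]

lemma Gmat_mulVec {n : ℕ} (z c c' : Fin n) (s : k) (hzc' : z ≠ c') (v : Fin n → k)
    (r : Fin n) :
    (Gmat z c c' s).mulVec v r
      = v r + (if r = z then s * v c else 0) + (if r = c' then s^2 * v c else 0) := by
  rw [Matrix.mulVec, dotProduct]
  have : ∀ u : Fin n, Gmat z c c' s r u * v u
      = (if r = u then 1 else 0) * v u + (if r = z ∧ u = c then s else 0) * v u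
        + (if r = c' ∧ u = c then s^2 else 0) * v u := by
    intro u; rw [Gmat]; simp [add_mul]
  rw [Finset.sum_congr rfl fun u _ => this u]
  rw [Finset.sum_add_distrib, Finset.sum_add_distrib]
  congr 1
  · congr 1
    · simp [ite_mul, Finset.sum_ite_eq]
    · by_cases hr : r = z
      · subst hr
        simp [ite_mul, Finset.sum_ite_eq', eq_comm]
      · simp [hr]
  · by_cases hr : r = c'
    · subst hr
      simp [ite_mul, Finset.sum_ite_eq', eq_comm]
    · simp [hr]

section
variable {n : ℕ} (z c c' : Fin n) (s : k)

lemma Gmat_mulVec_ne (hzc' : z ≠ c') (v : Fin n → k) (j : Fin n)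
    (h1 : j ≠ z) (h2 : j ≠ c') : (Gmat z c c' s).mulVec v j = v j := by
  rw [Gmat_mulVec z c c' s hzc' v j, if_neg h1, if_neg h2, add_zero, add_zero]

lemma Gmat_mulVec_z (hzc' : z ≠ c') (v : Fin n → k) :
    (Gmat z c c' s).mulVec v z = v z + s * v c := by
  rw [Gmat_mulVec z c c' s hzc' v z, if_pos rfl, if_neg hzc', add_zero]

lemma Gmat_mulVec_c' (hzc' : z ≠ c') (v : Fin n → k) :
    (Gmat z c c' s).mulVec v c' = v c' + s^2 * v c := by
  rw [Gmat_mulVec z c c' s hzc' v c', if_pos rfl, if_neg (Ne.symm hzc'), add_zero]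

end

lemma Gmat_inO (ν : ℕ) (s : k) (z c c' : Fin (2*ν+1))
    (hzv : z.1 = 2*ν) (hc : c.1 < 2*ν) (hc' : c'.1 < 2*ν)
    (hpair : (c.1 % 2 = 0 ∧ c'.1 = c.1 + 1) ∨ (c.1 % 2 = 1 ∧ c'.1 + 1 = c.1)) :
    inO (Gmat z c c' s) := by
  have hcz : c ≠ z := Fin.ne_of_val_ne (by omega)
  have hcc' : c ≠ c' := Fin.ne_of_val_ne (by omega)
  have hzc' : z ≠ c' := Fin.ne_of_val_ne (by omega)
  constructor
  · have := congrArg Matrix.det (Gmat_sq z c c' s hcz hcc')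
    rw [Matrix.det_mul, Matrix.det_one] at this
    exact IsUnit.of_mul_eq_one _ this
  · intro v
    obtain ⟨w, hw⟩ : ∃ w, w = (Gmat z c c' s).mulVec v := ⟨_, rfl⟩
    rw [← hw]
    have hwne : ∀ (j : Fin (2*ν+1)), j ≠ z → j ≠ c' → w j = v j := by
      intro j h1 h2; rw [hw]; exact Gmat_mulVec_ne z c c' s hzc' v j h1 h2
    have hwz : w z = v z + s * v c := by rw [hw]; exact Gmat_mulVec_z z c c' s hzc' v
    have hwc' : w c' = v c' + s^2 * v c := by rw [hw]; exact Gmat_mulVec_c' z c c' s hzc' v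
    clear hw
    rw [stdQ, stdQ, dif_pos (by omega : (2*ν+1) % 2 = 1), dif_pos (by omega : (2*ν+1) % 2 = 1)]
    obtain ⟨ρ, hρ⟩ : ∃ ρ : Fin ((2*ν+1)/2), ρ.1 = c.1/2 := ⟨⟨c.1/2, by omega⟩, rfl⟩
    have hmem : ρ ∈ (Finset.univ : Finset (Fin ((2*ν+1)/2))) := Finset.mem_univ ρ
    obtain ⟨S, hS⟩ : ∃ S : k, S = s^2 * (v c * v c) := ⟨_, rfl⟩
    have hpar2 : c'.1/2 = c.1/2 := by rcases hpair with ⟨h1,h2⟩|⟨h1,h2⟩ <;> omega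
    have hA : ∀ r ∈ Finset.univ.erase ρ,
        w ⟨2*r.1, by have := r.2; omega⟩ * w ⟨2*r.1+1, by have := r.2; omega⟩
          = v ⟨2*r.1, by have := r.2; omega⟩ * v ⟨2*r.1+1, by have := r.2; omega⟩ := by
      intro r hr
      have hrρ : r.1 ≠ c.1/2 := by
        intro h; exact (Finset.mem_erase.1 hr).1 (Fin.ext (by omega))
      have h2r := r.2
      rw [hwne ⟨2*r.1, by have := r.2; omega⟩
            (Fin.ne_of_val_ne (show 2*r.1 ≠ z.1 by omega))
            (Fin.ne_of_val_ne (show 2*r.1 ≠ c'.1 by omega)),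
          hwne ⟨2*r.1+1, by have := r.2; omega⟩
            (Fin.ne_of_val_ne (show 2*r.1+1 ≠ z.1 by omega))
            (Fin.ne_of_val_ne (show 2*r.1+1 ≠ c'.1 by omega))]
    have hB : w ⟨2*ρ.1, by have := ρ.2; omega⟩ * w ⟨2*ρ.1+1, by have := ρ.2; omega⟩
        = v ⟨2*ρ.1, by have := ρ.2; omega⟩ * v ⟨2*ρ.1+1, by have := ρ.2; omega⟩ + S := by
      rcases hpair with ⟨hpar, hcc⟩ | ⟨hpar, hcc⟩
      · have e1 : (⟨2*ρ.1, by have := ρ.2; omega⟩ : Fin (2*ν+1)) = c := by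
          apply Fin.ext; show 2*ρ.1 = c.1; omega
        have e2 : (⟨2*ρ.1+1, by have := ρ.2; omega⟩ : Fin (2*ν+1)) = c' := by
          apply Fin.ext; show 2*ρ.1+1 = c'.1; omega
        rw [e1, e2, hwne c hcz hcc', hwc', hS]
        ring
      · have e1 : (⟨2*ρ.1, by have := ρ.2; omega⟩ : Fin (2*ν+1)) = c' := by
          apply Fin.ext; show 2*ρ.1 = c'.1; omega
        have e2 : (⟨2*ρ.1+1, by have := ρ.2; omega⟩ : Fin (2*ν+1)) = c := by
          apply Fin.ext; show 2*ρ.1+1 = c.1; omega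
        rw [e1, e2, hwc', hwne c hcz hcc', hS]
        ring
    have hsum : (∑ r : Fin ((2*ν+1)/2), w ⟨2*r.1, by have := r.2; omega⟩ *
          w ⟨2*r.1+1, by have := r.2; omega⟩)
        = (∑ r : Fin ((2*ν+1)/2), v ⟨2*r.1, by have := r.2; omega⟩ *
          v ⟨2*r.1+1, by have := r.2; omega⟩) + S := by
      have hpt : ∀ r : Fin ((2*ν+1)/2),
          w ⟨2*r.1, by have := r.2; omega⟩ * w ⟨2*r.1+1, by have := r.2; omega⟩
          = v ⟨2*r.1, by have := r.2; omega⟩ * v ⟨2*r.1+1, by have := r.2; omega⟩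
            + (if r = ρ then S else 0) := by
        intro r
        by_cases hr : r = ρ
        · subst hr
          rw [if_pos rfl]
          exact hB
        · rw [if_neg hr, add_zero]
          exact hA r (Finset.mem_erase.2 ⟨hr, Finset.mem_univ r⟩)
      rw [Finset.sum_congr rfl (fun r _ => hpt r), Finset.sum_add_distrib,
        Finset.sum_ite_eq' Finset.univ ρ (fun _ => S)]
      rw [if_pos hmem]
    have hz2 : w ⟨2*ν+1-1, by omega⟩ ^ 2 = v ⟨2*ν+1-1, by omega⟩ ^ 2 + S := by
      have ez : (⟨2*ν+1-1, by omega⟩ : Fin (2*ν+1)) = z := by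
        apply Fin.ext; show 2*ν+1-1 = z.1; omega
      rw [ez, hwz, CharTwo.add_sq, hS]
      ring
    rw [hsum, hz2]
    have h0 := CharTwo.add_self_eq_zero S
    calc (∑ r : Fin ((2*ν+1)/2), v ⟨2*r.1, by have := r.2; omega⟩ *
          v ⟨2*r.1+1, by have := r.2; omega⟩) + S + (v ⟨2*ν+1-1, by omega⟩ ^ 2 + S)
        = (∑ r : Fin ((2*ν+1)/2), v ⟨2*r.1, by have := r.2; omega⟩ *
          v ⟨2*r.1+1, by have := r.2; omega⟩) + v ⟨2*ν+1-1, by omega⟩ ^ 2 + (S + S) := by ring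
      _ = _ := by rw [h0, add_zero]

end Aux

/-- For `ν ≥ 1`, every `m`-linear `SO(2ν+1)`-invariant polynomial over an algebraically
closed field of characteristic 2 has multiplicity at least `min m (2ν)` in the `x, y`
variables: every monomial has total degree at least `min m (2ν)` in the coordinates other
than `z` (the last coordinate). -/
theorem multilinear_invariant_xy_multiplicity
    (k : Type*) [Field k] [IsAlgClosed k] [CharP k 2]
    (ν m : ℕ) (hν : 1 ≤ ν) (hm : 1 ≤ m)
    (p : MvPolynomial (Fin m × Fin (2*ν+1)) k) (hlin : IsMultilinear p)
    (hinv : ∀ g : Matrix (Fin (2*ν+1)) (Fin (2*ν+1)) k, inO g → substAct g p = p) :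
    ∀ d ∈ p.support,
      min m (2*ν) ≤ ∑ i : Fin m, ∑ c : Fin (2*ν+1), if c.1 < 2*ν then d (i, c) else 0 := by
  intro d hd
  by_contra hcon
  push_neg at hcon
  obtain ⟨ρ₀, hdρ⟩ := exists_rho hlin hd
  subst hdρ
  have hst : ∀ d ∈ p.support, ∃ ρ : Fin m → Fin (2*ν+1), d = Dmon ρ :=
    fun d hd => exists_rho hlin hd
  obtain ⟨z, hzv⟩ : ∃ z : Fin (2*ν+1), z.1 = 2*ν := ⟨⟨2*ν, by omega⟩, rfl⟩
  -- rewrite the degree sum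
  have hT : (∑ i : Fin m, ∑ c : Fin (2*ν+1), if c.1 < 2*ν then (Dmon ρ₀) (i, c) else 0)
      = ∑ i : Fin m, (if (ρ₀ i).1 < 2*ν then 1 else 0) := by
    refine Finset.sum_congr rfl fun i _ => ?_
    have hterm : ∀ c : Fin (2*ν+1), (if c.1 < 2*ν then (Dmon ρ₀) (i, c) else 0)
        = if ρ₀ i = c then (if c.1 < 2*ν then 1 else 0) else 0 := by
      intro c
      rw [Dmon_apply]
      by_cases h1 : c.1 < 2*ν <;> by_cases h2 : ρ₀ i = c <;> simp [h1, h2]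
    rw [Finset.sum_congr rfl (fun c _ => hterm c), Finset.sum_ite_eq, if_pos (Finset.mem_univ _)]
  rw [hT] at hcon
  -- find a slot i₀ using the `z` coordinate
  obtain ⟨i₀, hi₀⟩ : ∃ i₀ : Fin m, ρ₀ i₀ = z := by
    by_contra hno
    push_neg at hno
    have hone : ∀ i : Fin m, (if (ρ₀ i).1 < 2*ν then (1:ℕ) else 0) = 1 := by
      intro i
      have h1 := (ρ₀ i).2
      have h2 : (ρ₀ i).1 ≠ z.1 := Fin.val_ne_of_ne (hno i)
      exact if_pos (by omega)
    rw [Finset.sum_congr rfl (fun i _ => hone i), Finset.sum_const, Finset.card_univ,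
      Fintype.card_fin, smul_eq_mul, mul_one] at hcon
    have := Nat.min_le_left m (2*ν)
    omega
  -- find an unused `xy` coordinate c
  have hcard : (Finset.univ.filter (fun i : Fin m => (ρ₀ i).1 < 2*ν)).card < 2*ν := by
    rw [Finset.card_filter]
    have := Nat.min_le_right m (2*ν)
    omega
  have hltcard : ((Finset.univ.filter (fun i : Fin m => (ρ₀ i).1 < 2*ν)).image ρ₀).card
      < (Finset.univ.filter (fun cc : Fin (2*ν+1) => cc.1 < 2*ν)).card := by
    have hle := Finset.card_image_le (s := Finset.univ.filter
      (fun i : Fin m => (ρ₀ i).1 < 2*ν)) (f := ρ₀)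
    have hXY : (Finset.univ.filter (fun cc : Fin (2*ν+1) => cc.1 < 2*ν)).card = 2*ν := by
      have hcompl : (Finset.univ.filter (fun cc : Fin (2*ν+1) => cc.1 < 2*ν))ᶜ = {z} := by
        ext cc
        simp [Finset.mem_compl, Finset.mem_filter, Fin.ext_iff]
        have := cc.2
        omega
      have h1 := Finset.card_compl (Finset.univ.filter (fun cc : Fin (2*ν+1) => cc.1 < 2*ν))
      rw [hcompl, Finset.card_singleton, Fintype.card_fin] at h1
      have h2 := Finset.card_le_univ (Finset.univ.filter (fun cc : Fin (2*ν+1) => cc.1 < 2*ν))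
      rw [Fintype.card_fin] at h2
      omega
    omega
  obtain ⟨c, hcXY, hcT⟩ := Finset.not_subset.1
    (fun hsub => absurd (Finset.card_le_card hsub) (Nat.not_le.2 hltcard))
  have hc : c.1 < 2*ν := (Finset.mem_filter.1 hcXY).2
  have hcnot : ∀ i, ρ₀ i ≠ c := by
    intro i hi
    exact hcT (Finset.mem_image.2 ⟨i, Finset.mem_filter.2 ⟨Finset.mem_univ i,
      by rw [hi]; exact hc⟩, hi⟩)
  -- the partner coordinate
  obtain ⟨c', hc', hpair⟩ : ∃ c' : Fin (2*ν+1), c'.1 < 2*ν ∧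
      ((c.1 % 2 = 0 ∧ c'.1 = c.1 + 1) ∨ (c.1 % 2 = 1 ∧ c'.1 + 1 = c.1)) := by
    by_cases hpar : c.1 % 2 = 0
    · exact ⟨⟨c.1+1, by omega⟩, by simp; omega, Or.inl ⟨hpar, rfl⟩⟩
    · exact ⟨⟨c.1-1, by omega⟩, by simp; omega, Or.inr ⟨by omega, by simp; omega⟩⟩
  have hcz : c ≠ z := Fin.ne_of_val_ne (by omega)
  have hzc : z ≠ c := Fin.ne_of_val_ne (by omega)
  have hcc' : c ≠ c' := Fin.ne_of_val_ne (by omega)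
  have hzc' : z ≠ c' := Fin.ne_of_val_ne (by omega)
  have hc'z : c' ≠ z := Fin.ne_of_val_ne (by omega)
  have hc'c : c' ≠ c := Fin.ne_of_val_ne (by omega)
  -- the key one-parameter relation
  have key : ∀ s : k, s * coeff (Dmon (Function.update ρ₀ i₀ z)) p
      + s^2 * coeff (Dmon (Function.update ρ₀ i₀ c')) p = 0 := by
    intro s
    have hO := hinv (Gmat z c c' s) (Gmat_inO ν s z c c' hzv hc hc' hpair)
    have h1 : eval (fun ic : Fin m × Fin (2*ν+1) =>
        if ic.1 = i₀ then (if ic.2 = c then (1:k) else 0)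
        else if ic.2 = ρ₀ ic.1 then 1 else 0) p
        = coeff (Dmon (Function.update ρ₀ i₀ c)) p := by
      rw [eval_L p hst i₀ ρ₀ (fun u => if u = c then (1:k) else 0)]
      simp only [ite_mul, one_mul, zero_mul]
      rw [Finset.sum_ite_eq', if_pos (Finset.mem_univ c)]
    have h2 : eval (fun ic : Fin m × Fin (2*ν+1) =>
        if ic.1 = i₀ then (if ic.2 = c then (1:k) else 0)
        else if ic.2 = ρ₀ ic.1 then 1 else 0) (substAct (Gmat z c c' s) p)
        = coeff (Dmon (Function.update ρ₀ i₀ c)) p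
          + (s * coeff (Dmon (Function.update ρ₀ i₀ z)) p
            + s^2 * coeff (Dmon (Function.update ρ₀ i₀ c')) p) := by
      rw [eval_substAct]
      have hfun : (fun ic : Fin m × Fin (2*ν+1) => ∑ u : Fin (2*ν+1),
          Gmat z c c' s ic.2 u * (if ic.1 = i₀ then (if u = c then (1:k) else 0)
            else if u = ρ₀ ic.1 then 1 else 0))
          = fun ic : Fin m × Fin (2*ν+1) =>
            if ic.1 = i₀ then ((if ic.2 = c then (1:k) else 0)
              + (if ic.2 = z then s else 0) + (if ic.2 = c' then s^2 else 0))
            else if ic.2 = ρ₀ ic.1 then 1 else 0 := by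
        funext ic
        obtain ⟨i, r⟩ := ic
        by_cases hi : i = i₀
        · simp only [hi, eq_self_iff_true, if_true]
          have : ∀ u : Fin (2*ν+1), Gmat z c c' s r u * (if u = c then (1:k) else 0)
              = if u = c then Gmat z c c' s r u else 0 := by
            intro u; by_cases hu : u = c <;> simp [hu]
          rw [Finset.sum_congr rfl (fun u _ => this u), Finset.sum_ite_eq',
            if_pos (Finset.mem_univ c)]
          simp [Gmat]
        · simp only [hi, if_false]
          have : ∀ u : Fin (2*ν+1), Gmat z c c' s r u * (if u = ρ₀ i then (1:k) else 0)
              = if u = ρ₀ i then Gmat z c c' s r u else 0 := by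
            intro u; by_cases hu : u = ρ₀ i <;> simp [hu]
          rw [Finset.sum_congr rfl (fun u _ => this u), Finset.sum_ite_eq',
            if_pos (Finset.mem_univ (ρ₀ i))]
          simp [Gmat, hcnot i]
      rw [hfun, eval_L p hst i₀ ρ₀ (fun u => (if u = c then (1:k) else 0)
        + (if u = z then s else 0) + (if u = c' then s^2 else 0))]
      have hexp : ∀ r : Fin (2*ν+1), ((if r = c then (1:k) else 0)
          + (if r = z then s else 0) + (if r = c' then s^2 else 0))
            * coeff (Dmon (Function.update ρ₀ i₀ r)) p
          = (if r = c then coeff (Dmon (Function.update ρ₀ i₀ r)) p else 0)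
            + (if r = z then s * coeff (Dmon (Function.update ρ₀ i₀ r)) p else 0)
            + (if r = c' then s^2 * coeff (Dmon (Function.update ρ₀ i₀ r)) p else 0) := by
        intro r
        by_cases h1 : r = c
        · subst h1; simp [hcz, hcc']
        · by_cases h2 : r = z
          · subst h2; simp [hzc, hzc', h1]
          · by_cases h3 : r = c'
            · subst h3; simp [hc'c, hc'z, h1, h2]
            · simp [h1, h2, h3]
      rw [Finset.sum_congr rfl (fun r _ => hexp r), Finset.sum_add_distrib,
        Finset.sum_add_distrib, Finset.sum_ite_eq', Finset.sum_ite_eq', Finset.sum_ite_eq',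
        if_pos (Finset.mem_univ c), if_pos (Finset.mem_univ z), if_pos (Finset.mem_univ c')]
      ring
    rw [hO, h1] at h2
    exact left_eq_add.1 h2
  -- extract that the coefficient vanishes
  have hz1 : coeff (Dmon (Function.update ρ₀ i₀ z)) p
      + coeff (Dmon (Function.update ρ₀ i₀ c')) p = 0 := by
    have := key 1
    rw [one_mul, one_pow, one_mul] at this
    exact this
  haveI := Classical.decEq k
  obtain ⟨t, ht⟩ := Infinite.exists_notMem_finset ({0, 1} : Finset k)
  have ht0 : t ≠ 0 := by intro h; exact ht (by simp [h])
  have ht1 : t ≠ 1 := by intro h; exact ht (by simp [h])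
  have hzero : coeff (Dmon (Function.update ρ₀ i₀ z)) p = 0 := by
    have hkt := key t
    have hsub : coeff (Dmon (Function.update ρ₀ i₀ c'))  p
        = - coeff (Dmon (Function.update ρ₀ i₀ z)) p := by
      linear_combination hz1
    rw [hsub] at hkt
    have hfact : (t - t^2) * coeff (Dmon (Function.update ρ₀ i₀ z)) p = 0 := by
      linear_combination hkt
    rcases mul_eq_zero.1 hfact with h | h
    · exfalso
      have : t * (1 - t) = 0 := by linear_combination h
      rcases mul_eq_zero.1 this with h' | h'
      · exact ht0 h'
      · exact ht1 (by linear_combination -h')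
    · exact h
  rw [show Function.update ρ₀ i₀ z = ρ₀ by rw [← hi₀]; exact Function.update_eq_self i₀ ρ₀]
    at hzero
  exact (MvPolynomial.mem_support_iff.1 hd) hzero
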